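/- Let G be a connected non-degenerate trigraph, let (A, B) be a square-connected homogeneous pair of strong cliques in G, and let G' be an optimal antithickening of G with thickening map I. Then there exist semiadjacent vertices a, b of G' such that A ⊆ I(a) and B ⊆ I(b). -/

import Mathlib

/-- A trigraph on a vertex type `V`: a symmetric adjacency function with values in
`{1, 0, -1}`, zero on the diagonal, such that semiedges form a matching. -/
structure Trigraph (V : Type) where
  θ : V → V → ℤ
  range_mem : ∀ u v, θ u v = 1 ∨ θ u v = 0 ∨ θ u v = -1
  symm : ∀ u v, θ u v = θ v u
  refl_zero : ∀ v, θ v v = 0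
  semi_matching : ∀ u v w : V, u ≠ v → u ≠ w → v ≠ w → θ u v = 0 → θ u w ≠ 0

namespace Trigraph

variable {V V' V'' : Type}

/-- `u` and `v` are strongly adjacent. -/
def StrongAdj (G : Trigraph V) (u v : V) : Prop := G.θ u v = 1

/-- Distinct `u` and `v` are semiadjacent. -/
def SemiAdj (G : Trigraph V) (u v : V) : Prop := u ≠ v ∧ G.θ u v = 0

/-- Distinct `u` and `v` are adjacent. -/
def Adj (G : Trigraph V) (u v : V) : Prop := u ≠ v ∧ (G.θ u v = 1 ∨ G.θ u v = 0)

/-- Distinct `u` and `v` are antiadjacent. -/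
def AntiAdj (G : Trigraph V) (u v : V) : Prop := u ≠ v ∧ (G.θ u v = 0 ∨ G.θ u v = -1)

/-- `u` and `v` are strongly antiadjacent. -/
def StrongAntiAdj (G : Trigraph V) (u v : V) : Prop := G.θ u v = -1

/-- `X` is strongly complete to `Y`. -/
def StronglyComplete (G : Trigraph V) (X Y : Set V) : Prop :=
  ∀ u ∈ X, ∀ v ∈ Y, G.StrongAdj u v

/-- `X` is strongly anticomplete to `Y`. -/
def StronglyAnticomplete (G : Trigraph V) (X Y : Set V) : Prop :=
  ∀ u ∈ X, ∀ v ∈ Y, G.StrongAntiAdj u v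

/-- A strong clique: pairwise strongly adjacent vertices. -/
def IsStrongClique (G : Trigraph V) (K : Set V) : Prop := K.Pairwise G.StrongAdj

/-- A stable set: pairwise antiadjacent vertices. -/
def IsStableSet (G : Trigraph V) (S : Set V) : Prop := S.Pairwise G.AntiAdj

/-- The neighbourhood of a vertex: the set of vertices adjacent to it. -/
def neighborhood (G : Trigraph V) (v : V) : Set V := {u | G.Adj v u}

/-- Claw-free: no vertex has three pairwise antiadjacent vertices in its neighbourhood. -/
def ClawFree (G : Trigraph V) : Prop :=
  ¬ ∃ v a b c : V, G.Adj v a ∧ G.Adj v b ∧ G.Adj v c ∧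
    G.AntiAdj a b ∧ G.AntiAdj a c ∧ G.AntiAdj b c

/-- Cobipartite: the vertex set is the union of two strong cliques. -/
def Cobipartite (G : Trigraph V) : Prop :=
  ∃ K1 K2 : Set V, G.IsStrongClique K1 ∧ G.IsStrongClique K2 ∧ K1 ∪ K2 = Set.univ

/-- Quasi-line: the neighbourhood of every vertex is the union of two strong cliques. -/
def QuasiLine (G : Trigraph V) : Prop :=
  ∀ v : V, ∃ K1 K2 : Set V, G.IsStrongClique K1 ∧ G.IsStrongClique K2 ∧
    G.neighborhood v = K1 ∪ K2

/-- Connected: any two vertices are joined by a sequence of consecutively adjacent vertices. -/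
def Connected (G : Trigraph V) : Prop :=
  ∀ u v : V, Relation.ReflTransGen G.Adj u v

/-- Non-degenerate: quasi-line and not cobipartite, or claw-free with stability number ≥ 3. -/
def NonDegenerate (G : Trigraph V) : Prop :=
  (G.QuasiLine ∧ ¬ G.Cobipartite) ∨
  (G.ClawFree ∧ ∃ S : Set V, G.IsStableSet S ∧ 3 ≤ S.ncard)

/-- A homogeneous set: `|V| > |X| ≥ 2` and every vertex outside `X` is strongly complete
or strongly anticomplete to `X`. -/
def HomogeneousSet (G : Trigraph V) (X : Set V) : Prop :=
  2 ≤ X.ncard ∧ X ≠ Set.univ ∧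
  ∀ v ∉ X, G.StronglyComplete {v} X ∨ G.StronglyAnticomplete {v} X

/-- `v1 v2 v3 v4` is a square: the pairs `v1v3`, `v2v4` are antiadjacent and the other
four pairs are adjacent. -/
def IsSquare (G : Trigraph V) (v1 v2 v3 v4 : V) : Prop :=
  G.AntiAdj v1 v3 ∧ G.AntiAdj v2 v4 ∧
  G.Adj v1 v2 ∧ G.Adj v2 v3 ∧ G.Adj v3 v4 ∧ G.Adj v4 v1

/-- `X` contains a square. -/
def HasSquareIn (G : Trigraph V) (X : Set V) : Prop :=
  ∃ v1 v2 v3 v4 : V, G.IsSquare v1 v2 v3 v4 ∧ ({v1, v2, v3, v4} : Set V) ⊆ X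

/-- Homogeneous pair of strong cliques `(A, B)`. -/
def HPOSC (G : Trigraph V) (A B : Set V) : Prop :=
  A.Nonempty ∧ B.Nonempty ∧ Disjoint A B ∧
  G.IsStrongClique A ∧ G.IsStrongClique B ∧
  ¬ (∃ a b : V, A = {a} ∧ B = {b}) ∧
  ∀ v ∉ A ∪ B,
    (G.StronglyComplete {v} A ∨ G.StronglyAnticomplete {v} A) ∧
    (G.StronglyComplete {v} B ∨ G.StronglyAnticomplete {v} B)

/-- Deletion-minimal homogeneous pair of strong cliques. -/
def DeletionMinimal (G : Trigraph V) (A B : Set V) : Prop :=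
  G.HPOSC A B ∧ G.HasSquareIn (A ∪ B) ∧
  (∀ a ∈ A, ¬ G.StronglyComplete {a} B ∧ ¬ G.StronglyAnticomplete {a} B) ∧
  (∀ b ∈ B, ¬ G.StronglyComplete {b} A ∧ ¬ G.StronglyAnticomplete {b} A)

/-- There is a square contained in `X` intersecting both `S1` and `S2`. -/
def SquareMeets (G : Trigraph V) (X S1 S2 : Set V) : Prop :=
  ∃ v1 v2 v3 v4 : V, G.IsSquare v1 v2 v3 v4 ∧ ({v1, v2, v3, v4} : Set V) ⊆ X ∧
    (({v1, v2, v3, v4} : Set V) ∩ S1).Nonempty ∧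
    (({v1, v2, v3, v4} : Set V) ∩ S2).Nonempty

/-- Square-connected homogeneous pair of strong cliques. -/
def SquareConnected (G : Trigraph V) (A B : Set V) : Prop :=
  G.HPOSC A B ∧
  (∀ A' A'' : Set V, A'.Nonempty → A''.Nonempty → A' ∪ A'' = A → Disjoint A' A'' →
    G.SquareMeets (A ∪ B) A' A'') ∧
  (∀ B' B'' : Set V, B'.Nonempty → B''.Nonempty → B' ∪ B'' = B → Disjoint B' B'' →
    G.SquareMeets (A ∪ B) B' B'')

/-- Inclusion-maximal square-connected homogeneous pair of strong cliques. -/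
def MaxSquareConnected (G : Trigraph V) (A B : Set V) : Prop :=
  G.SquareConnected A B ∧
  ∀ A' B' : Set V, G.SquareConnected A' B' → A ⊆ A' → B ⊆ B' → A' = A ∧ B' = B

/-- Two homogeneous pairs have skew intersection if a part of one intersects both
parts of the other. -/
def SkewIntersection (A1 B1 A2 B2 : Set V) : Prop :=
  ((A1 ∩ A2).Nonempty ∧ (A1 ∩ B2).Nonempty) ∨
  ((B1 ∩ A2).Nonempty ∧ (B1 ∩ B2).Nonempty) ∨
  ((A2 ∩ A1).Nonempty ∧ (A2 ∩ B1).Nonempty) ∨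
  ((B2 ∩ A1).Nonempty ∧ (B2 ∩ B1).Nonempty)

/-- Laminar: contains no square-connected homogeneous pair of strong cliques. -/
def Laminar (G : Trigraph V) : Prop := ¬ ∃ A B : Set V, G.SquareConnected A B

/-- `G` is a thickening of `G'` via the map `I` (equivalently, `G'` is an antithickening
of `G`): the `I v` are nonempty strong cliques partitioning `V(G)` respecting adjacency. -/
def IsThickening (G : Trigraph V) (G' : Trigraph V') (I : V' → Set V) : Prop :=
  (∀ v : V', (I v).Nonempty ∧ G.IsStrongClique (I v)) ∧
  (∀ u v : V', u ≠ v → Disjoint (I u) (I v)) ∧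
  (⋃ v : V', I v) = Set.univ ∧
  ∀ u v : V', u ≠ v →
    (G'.StrongAdj u v → G.StronglyComplete (I u) (I v)) ∧
    (G'.StrongAntiAdj u v → G.StronglyAnticomplete (I u) (I v)) ∧
    (G'.SemiAdj u v →
      ¬ G.StronglyComplete (I u) (I v) ∧ ¬ G.StronglyAnticomplete (I u) (I v))

/-- `G'` (with thickening map `I`) is an optimal antithickening of `G`: it is a laminar
antithickening with the maximum possible number of vertices. -/
def OptimalAntithickening (G : Trigraph V) (G' : Trigraph V') (I : V' → Set V) : Prop :=
  G.IsThickening G' I ∧ G'.Laminar ∧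
  ∀ (W : Type) (H : Trigraph W) (J : W → Set V),
    G.IsThickening H J → H.Laminar → Nat.card W ≤ Nat.card V'

/-- Isomorphism of trigraphs. -/
def Isomorphic (G1 : Trigraph V) (G2 : Trigraph V') : Prop :=
  ∃ f : V ≃ V', ∀ u v : V, G2.θ (f u) (f v) = G1.θ u v

end Trigraph
namespace SC11
open Trigraph

variable {V V' : Type}

lemma theta_le_one (G : Trigraph V) (u v : V) : G.θ u v ≤ 1 := by
  rcases G.range_mem u v with h|h|h <;> omega

lemma neg_one_le_theta (G : Trigraph V) (u v : V) : -1 ≤ G.θ u v := by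
  rcases G.range_mem u v with h|h|h <;> omega

lemma adj_symm {G : Trigraph V} {u v : V} (h : G.Adj u v) : G.Adj v u :=
  ⟨h.1.symm, by rw [G.symm]; exact h.2⟩

lemma antiAdj_symm {G : Trigraph V} {u v : V} (h : G.AntiAdj u v) : G.AntiAdj v u :=
  ⟨h.1.symm, by rw [G.symm]; exact h.2⟩

lemma adj_nonneg {G : Trigraph V} {u v : V} (h : G.Adj u v) : 0 ≤ G.θ u v := by
  rcases h.2 with h'|h' <;> omega

lemma antiAdj_nonpos {G : Trigraph V} {u v : V} (h : G.AntiAdj u v) : G.θ u v ≤ 0 := by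
  rcases h.2 with h'|h' <;> omega

lemma adj_of_nonneg {G : Trigraph V} {u v : V} (hne : u ≠ v) (h : 0 ≤ G.θ u v) : G.Adj u v := by
  refine ⟨hne, ?_⟩
  rcases G.range_mem u v with h'|h'|h'
  · exact Or.inl h'
  · exact Or.inr h'
  · omega

lemma antiAdj_of_nonpos {G : Trigraph V} {u v : V} (hne : u ≠ v) (h : G.θ u v ≤ 0) :
    G.AntiAdj u v := by
  refine ⟨hne, ?_⟩
  rcases G.range_mem u v with h'|h'|h'
  · omega
  · exact Or.inl h'
  · exact Or.inr h'

lemma clique_theta {G : Trigraph V} {K : Set V} (hK : G.IsStrongClique K)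
    {x y : V} (hx : x ∈ K) (hy : y ∈ K) (hxy : x ≠ y) : G.θ x y = 1 := hK hx hy hxy

/-- quasi-line trigraphs are claw-free -/
lemma clawfree_of_quasiline {G : Trigraph V} (h : G.QuasiLine) : G.ClawFree := by
  rintro ⟨v, a, b, c, hva, hvb, hvc, hab, hac, hbc⟩
  obtain ⟨K1, K2, hK1, hK2, hN⟩ := h v
  have key : ∀ (K : Set V), G.IsStrongClique K → ∀ x y : V, x ∈ K → y ∈ K →
      G.AntiAdj x y → False := by
    intro K hK x y hx hy hxy
    have h1 := clique_theta hK hx hy hxy.1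
    have h2 := antiAdj_nonpos hxy
    omega
  have ha : a ∈ K1 ∪ K2 := by rw [← hN]; exact hva
  have hb : b ∈ K1 ∪ K2 := by rw [← hN]; exact hvb
  have hc : c ∈ K1 ∪ K2 := by rw [← hN]; exact hvc
  rcases ha with ha|ha <;> rcases hb with hb|hb <;> rcases hc with hc|hc <;>
    first
      | exact key K1 hK1 a b ha hb hab
      | exact key K1 hK1 a c ha hc hac
      | exact key K1 hK1 b c hb hc hbc
      | exact key K2 hK2 a b ha hb hab
      | exact key K2 hK2 a c ha hc hac
      | exact key K2 hK2 b c hb hc hbc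

lemma clawfree_of_nondegenerate {G : Trigraph V} (h : G.NonDegenerate) : G.ClawFree := by
  rcases h with ⟨hql, _⟩ | ⟨hcf, _⟩
  · exact clawfree_of_quasiline hql
  · exact hcf

lemma ne_of_mem_disjoint {A B : Set V} (h : Disjoint A B) {x y : V}
    (hx : x ∈ A) (hy : y ∈ B) : x ≠ y := by
  rintro rfl
  exact Set.disjoint_left.mp h hx hy

/-- decomposition of a square inside `A ∪ B` -/
lemma square_decomp {G : Trigraph V} {A B : Set V}
    (hA : G.IsStrongClique A) (hB : G.IsStrongClique B) (hd : Disjoint A B)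
    {v1 v2 v3 v4 : V} (hsq : G.IsSquare v1 v2 v3 v4)
    (hsub : ({v1, v2, v3, v4} : Set V) ⊆ A ∪ B) :
    ∃ a1 a2 b1 b2 : V, a1 ∈ A ∧ a2 ∈ A ∧ b1 ∈ B ∧ b2 ∈ B ∧ a1 ≠ a2 ∧ b1 ≠ b2 ∧
      G.θ a1 b1 ≤ 0 ∧ G.θ a2 b2 ≤ 0 ∧ 0 ≤ G.θ a1 b2 ∧ 0 ≤ G.θ a2 b1 ∧
      ({v1, v2, v3, v4} : Set V) = {a1, a2, b1, b2} := by
  obtain ⟨h13, h24, h12, h23, h34, h41⟩ := hsq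
  have m1 : v1 ∈ A ∪ B := hsub (by simp)
  have m2 : v2 ∈ A ∪ B := hsub (by simp)
  have m3 : v3 ∈ A ∪ B := hsub (by simp)
  have m4 : v4 ∈ A ∪ B := hsub (by simp)
  have split : ∀ x y : V, G.AntiAdj x y → x ∈ A ∪ B → y ∈ A ∪ B →
      (x ∈ A ∧ y ∈ B) ∨ (x ∈ B ∧ y ∈ A) := by
    intro x y hxy hx hy
    rcases hx with hx|hx <;> rcases hy with hy|hy
    · have := clique_theta hA hx hy hxy.1; have := antiAdj_nonpos hxy; omega
    · exact Or.inl ⟨hx, hy⟩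
    · exact Or.inr ⟨hx, hy⟩
    · have := clique_theta hB hx hy hxy.1; have := antiAdj_nonpos hxy; omega
  have sym : ∀ x y : V, G.θ x y = G.θ y x := G.symm
  rcases split v1 v3 h13 m1 m3 with ⟨h1A, h3B⟩|⟨h1B, h3A⟩ <;>
    rcases split v2 v4 h24 m2 m4 with ⟨h2A, h4B⟩|⟨h2B, h4A⟩
  · exact ⟨v1, v2, v3, v4, h1A, h2A, h3B, h4B, h12.1, h34.1,
      antiAdj_nonpos h13, antiAdj_nonpos h24,
      by rw [sym]; exact adj_nonneg h41, adj_nonneg h23, rfl⟩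
  · refine ⟨v1, v4, v3, v2, h1A, h4A, h3B, h2B, h41.1.symm, h23.1.symm,
      antiAdj_nonpos h13, by rw [sym]; exact antiAdj_nonpos h24,
      adj_nonneg h12, by rw [sym]; exact adj_nonneg h34, ?_⟩
    ext z; simp only [Set.mem_insert_iff, Set.mem_singleton_iff]; tauto
  · refine ⟨v2, v3, v4, v1, h2A, h3A, h4B, h1B, h23.1, h41.1,
      antiAdj_nonpos h24, by rw [sym]; exact antiAdj_nonpos h13,
      by rw [sym]; exact adj_nonneg h12, adj_nonneg h34, ?_⟩
    ext z; simp only [Set.mem_insert_iff, Set.mem_singleton_iff]; tauto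
  · refine ⟨v3, v4, v1, v2, h3A, h4A, h1B, h2B, h34.1, h12.1,
      by rw [sym]; exact antiAdj_nonpos h13, by rw [sym]; exact antiAdj_nonpos h24,
      by rw [sym]; exact adj_nonneg h23, adj_nonneg h41, ?_⟩
    ext z; simp only [Set.mem_insert_iff, Set.mem_singleton_iff]; tauto

lemma HPOSC_symm {G : Trigraph V} {A B : Set V} (h : G.HPOSC A B) : G.HPOSC B A := by
  obtain ⟨h1, h2, h3, h4, h5, h6, h7⟩ := h
  refine ⟨h2, h1, h3.symm, h5, h4, ?_, ?_⟩
  · rintro ⟨b, a, hb, ha⟩; exact h6 ⟨a, b, ha, hb⟩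
  · intro v hv
    have : v ∉ A ∪ B := by rw [Set.union_comm]; exact hv
    exact (h7 v this).symm

lemma SC_symm {G : Trigraph V} {A B : Set V} (h : G.SquareConnected A B) :
    G.SquareConnected B A := by
  obtain ⟨h1, h2, h3⟩ := h
  refine ⟨HPOSC_symm h1, ?_, ?_⟩
  · intro B' B'' hB' hB'' hun hd
    have := h3 B' B'' hB' hB'' hun hd
    rwa [Set.union_comm] at this
  · intro A' A'' hA' hA'' hun hd
    have := h2 A' A'' hA' hA'' hun hd
    rwa [Set.union_comm] at this

/-- a square-connected pair contains a square -/
lemma exists_square {G : Trigraph V} {A B : Set V} (h : G.SquareConnected A B) :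
    ∃ v1 v2 v3 v4 : V, G.IsSquare v1 v2 v3 v4 ∧ ({v1, v2, v3, v4} : Set V) ⊆ A ∪ B := by
  have hpair : (∃ x y : V, x ∈ A ∧ y ∈ A ∧ x ≠ y) ∨ (∃ x y : V, x ∈ B ∧ y ∈ B ∧ x ≠ y) := by
    by_contra hcon
    push_neg at hcon
    obtain ⟨hA, hB⟩ := hcon
    obtain ⟨a, ha⟩ := h.1.1
    obtain ⟨b, hb⟩ := h.1.2.1
    refine h.1.2.2.2.2.2.1 ⟨a, b, ?_, ?_⟩
    · ext z; simp only [Set.mem_singleton_iff]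
      exact ⟨fun hz => hA z a hz ha, fun hz => hz ▸ ha⟩
    · ext z; simp only [Set.mem_singleton_iff]
      exact ⟨fun hz => hB z b hz hb, fun hz => hz ▸ hb⟩
  have part : ∀ (X : Set V) (x y : V), x ∈ X → y ∈ X → x ≠ y →
      ({x} : Set V).Nonempty ∧ (X \ {x}).Nonempty ∧ {x} ∪ (X \ {x}) = X ∧
        Disjoint ({x} : Set V) (X \ {x}) := by
    intro X x y hx hy hxy
    refine ⟨⟨x, rfl⟩, ⟨y, hy, fun hz => hxy (Set.mem_singleton_iff.mp hz).symm⟩, ?_, ?_⟩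
    · ext z
      simp only [Set.mem_union, Set.mem_singleton_iff, Set.mem_diff]
      constructor
      · rintro (rfl|⟨hz, _⟩) <;> [exact hx; exact hz]
      · intro hz; by_cases hzx : z = x
        · exact Or.inl hzx
        · exact Or.inr ⟨hz, by simpa using hzx⟩
    · rw [Set.disjoint_left]
      rintro z rfl hz
      exact hz.2 rfl
  rcases hpair with ⟨x, y, hx, hy, hxy⟩ | ⟨x, y, hx, hy, hxy⟩
  · obtain ⟨p1, p2, p3, p4⟩ := part A x y hx hy hxy
    obtain ⟨v1, v2, v3, v4, hsq, hsub, -, -⟩ := h.2.1 _ _ p1 p2 p3 p4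
    exact ⟨v1, v2, v3, v4, hsq, hsub⟩
  · obtain ⟨p1, p2, p3, p4⟩ := part B x y hx hy hxy
    obtain ⟨v1, v2, v3, v4, hsq, hsub, -, -⟩ := h.2.2 _ _ p1 p2 p3 p4
    exact ⟨v1, v2, v3, v4, hsq, hsub⟩

/-- every vertex of A has an antiadjacent and an adjacent partner in B -/
lemma partners {G : Trigraph V} {A B : Set V} (h : G.SquareConnected A B) :
    ∀ x ∈ A, (∃ y ∈ B, G.θ x y ≤ 0) ∧ (∃ y ∈ B, 0 ≤ G.θ x y) := by
  intro x hx
  have hA := h.1.2.2.2.1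
  have hB := h.1.2.2.2.2.1
  have hd := h.1.2.2.1
  -- A has at least two elements
  obtain ⟨w1, w2, w3, w4, hsq0, hsub0⟩ := exists_square h
  obtain ⟨a1, a2, b1, b2, ha1, ha2, hb1, hb2, ha12, hb12, -, -, -, -, -⟩ :=
    square_decomp hA hB hd hsq0 hsub0
  have hrest : (A \ {x}).Nonempty := by
    by_cases hax : a1 = x
    · exact ⟨a2, ha2, fun hz => ha12 (hax ▸ (Set.mem_singleton_iff.mp hz).symm ▸ rfl)⟩
    · exact ⟨a1, ha1, fun hz => hax (Set.mem_singleton_iff.mp hz)⟩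
  have hun : {x} ∪ (A \ {x}) = A := by
    ext z
    simp only [Set.mem_union, Set.mem_singleton_iff, Set.mem_diff]
    constructor
    · rintro (rfl|⟨hz, _⟩) <;> [exact hx; exact hz]
    · intro hz; by_cases hzx : z = x
      · exact Or.inl hzx
      · exact Or.inr ⟨hz, by simpa using hzx⟩
  have hdp : Disjoint ({x} : Set V) (A \ {x}) := by
    rw [Set.disjoint_left]
    rintro z rfl hz
    exact hz.2 rfl
  obtain ⟨v1, v2, v3, v4, hsq, hsub, hm1, hm2⟩ :=
    h.2.1 {x} (A \ {x}) ⟨x, rfl⟩ hrest hun hdp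
  obtain ⟨a1', a2', b1', b2', ha1', ha2', hb1', hb2', -, -, hθ11, hθ22, hθ12, hθ21, hset⟩ :=
    square_decomp hA hB hd hsq hsub
  obtain ⟨z, hzsq, hzx⟩ := hm1
  have hzx' : z = x := Set.mem_singleton_iff.mp hzx
  subst hzx'
  rw [hset] at hzsq
  have hnotB : z ∉ B := fun hzB => ne_of_mem_disjoint hd hx hzB rfl
  rcases hzsq with rfl|hz2
  · exact ⟨⟨b1', hb1', hθ11⟩, ⟨b2', hb2', hθ12⟩⟩
  rcases hz2 with rfl|hz3
  · exact ⟨⟨b2', hb2', hθ22⟩, ⟨b1', hb1', hθ21⟩⟩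
  rcases hz3 with rfl|hz4
  · exact absurd hb1' hnotB
  · rw [Set.mem_singleton_iff] at hz4
    subst hz4
    exact absurd hb2' hnotB

/-- Lemma U: there is a vertex outside `A ∪ B` that is strongly complete to one side
and strongly anticomplete to the other. -/
lemma exists_mixed {G : Trigraph V} [Fintype V] (hconn : G.Connected)
    (hnd : G.NonDegenerate) {A B : Set V} (hAB : G.SquareConnected A B) :
    ∃ v, v ∉ A ∪ B ∧
      (((∀ x ∈ A, G.θ v x = 1) ∧ (∀ y ∈ B, G.θ v y = -1)) ∨
       ((∀ x ∈ A, G.θ v x = -1) ∧ (∀ y ∈ B, G.θ v y = 1))) := by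
  have hcf : G.ClawFree := clawfree_of_nondegenerate hnd
  have hd := hAB.1.2.2.1
  have hcliqA := hAB.1.2.2.2.1
  have hcliqB := hAB.1.2.2.2.2.1
  have hhomog := hAB.1.2.2.2.2.2.2
  obtain ⟨x₀, hx₀⟩ := hAB.1.1
  obtain ⟨⟨yt, hyt, hytv⟩, ⟨yo, hyo, hyov⟩⟩ := partners hAB x₀ hx₀
  by_contra hU
  push_neg at hU
  -- every outside vertex is uniform on A ∪ B
  have huniform : ∀ v, v ∉ A ∪ B →
      (∀ z ∈ A ∪ B, G.θ v z = 1) ∨ (∀ z ∈ A ∪ B, G.θ v z = -1) := by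
    intro v hv
    have h1 := hhomog v hv
    have hAv : (∀ x ∈ A, G.θ v x = 1) ∨ (∀ x ∈ A, G.θ v x = -1) := by
      rcases h1.1 with h|h
      · exact Or.inl fun x hx => h v rfl x hx
      · exact Or.inr fun x hx => h v rfl x hx
    have hBv : (∀ y ∈ B, G.θ v y = 1) ∨ (∀ y ∈ B, G.θ v y = -1) := by
      rcases h1.2 with h|h
      · exact Or.inl fun y hy => h v rfl y hy
      · exact Or.inr fun y hy => h v rfl y hy
    rcases hAv with hAv|hAv <;> rcases hBv with hBv|hBv
    · exact Or.inl (by rintro z (hz|hz); exacts [hAv z hz, hBv z hz])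
    · obtain ⟨y, hy, hne⟩ := (hU v hv).1 hAv
      exact absurd (hBv y hy) hne
    · obtain ⟨y, hy, hne⟩ := (hU v hv).2 hAv
      exact absurd (hBv y hy) hne
    · exact Or.inr (by rintro z (hz|hz); exacts [hAv z hz, hBv z hz])
  set N : Set V := {v | v ∉ A ∪ B ∧ ∀ z ∈ A ∪ B, G.θ v z = 1} with hN
  set M : Set V := {v | v ∉ A ∪ B ∧ ∀ z ∈ A ∪ B, G.θ v z = -1} with hM
  have hNM : ∀ n ∈ N, ∀ m ∈ M, ¬ G.Adj n m := by
    intro n hn m hm hadj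
    refine hcf ⟨n, x₀, yt, m, ?_, ?_, ?_, ?_, ?_, ?_⟩
    · exact ⟨fun h => hn.1 (h ▸ Or.inl hx₀), Or.inl (hn.2 x₀ (Or.inl hx₀))⟩
    · exact ⟨fun h => hn.1 (h ▸ Or.inr hyt), Or.inl (hn.2 yt (Or.inr hyt))⟩
    · exact hadj
    · exact antiAdj_of_nonpos (ne_of_mem_disjoint hd hx₀ hyt) hytv
    · refine ⟨fun h => hm.1 (h ▸ Or.inl hx₀), Or.inr ?_⟩
      rw [G.symm]; exact hm.2 x₀ (Or.inl hx₀)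
    · refine ⟨fun h => hm.1 (h ▸ Or.inr hyt), Or.inr ?_⟩
      rw [G.symm]; exact hm.2 yt (Or.inr hyt)
  have hMempty : M = ∅ := by
    by_contra hMne
    obtain ⟨m₀, hm₀⟩ := Set.nonempty_iff_ne_empty.mpr hMne
    have hreach : ∀ z, Relation.ReflTransGen G.Adj m₀ z → z ∈ M := by
      intro z hz
      induction hz with
      | refl => exact hm₀
      | @tail b' c' hab hlast ih =>
        by_cases hc : c' ∈ A ∪ B
        · have h1 := ih.2 c' hc
          have h2 := adj_nonneg hlast
          omega
        · rcases huniform c' hc with h'|h'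
          · exact absurd (adj_symm hlast) (hNM c' ⟨hc, h'⟩ b' ih)
          · exact ⟨hc, h'⟩
    have := hreach x₀ (hconn m₀ x₀)
    exact this.1 (Or.inl hx₀)
  have hOut : ∀ v, v ∉ A ∪ B → v ∈ N := by
    intro v hv
    rcases huniform v hv with h|h
    · exact ⟨hv, h⟩
    · have : v ∈ M := ⟨hv, h⟩
      rw [hMempty] at this
      exact absurd this (Set.notMem_empty v)
  rcases hnd with ⟨hql, hncb⟩ | ⟨-, S, hS, hScard⟩
  · -- quasi-line branch: build a cobipartition
    obtain ⟨K1, K2, hK1, hK2, hnbhd⟩ := hql x₀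
    refine hncb ⟨A ∪ {n | n ∈ N ∧ n ∈ K1}, B ∪ {n | n ∈ N ∧ n ∉ K1}, ?_, ?_, ?_⟩
    · intro u hu w hw huw
      rcases hu with hu|hu <;> rcases hw with hw|hw
      · exact hcliqA hu hw huw
      · exact (G.symm u w).trans (hw.1.2 u (Or.inl hu))
      · exact hu.1.2 w (Or.inl hw)
      · exact hK1 hu.2 hw.2 huw
    · intro u hu w hw huw
      have hmemK2 : ∀ n : V, n ∈ N → n ∉ K1 → n ∈ K2 := by
        intro n hn hnK1
        have : n ∈ G.neighborhood x₀ := by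
          refine ⟨fun h => hn.1 (h ▸ Or.inl hx₀), Or.inl ?_⟩
          rw [G.symm]; exact hn.2 x₀ (Or.inl hx₀)
        rw [hnbhd] at this
        rcases this with h|h
        · exact absurd h hnK1
        · exact h
      rcases hu with hu|hu <;> rcases hw with hw|hw
      · exact hcliqB hu hw huw
      · exact (G.symm u w).trans (hw.1.2 u (Or.inr hu))
      · exact hu.1.2 w (Or.inr hw)
      · exact hK2 (hmemK2 u hu.1 hu.2) (hmemK2 w hw.1 hw.2) huw
    · ext v
      simp only [Set.mem_union, Set.mem_univ, iff_true]
      by_cases hv : v ∈ A ∪ B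
      · rcases hv with hv|hv
        · exact Or.inl (Or.inl hv)
        · exact Or.inr (Or.inl hv)
      · have hvN := hOut v hv
        by_cases hvK : v ∈ K1
        · exact Or.inl (Or.inr ⟨hvN, hvK⟩)
        · exact Or.inr (Or.inr ⟨hvN, hvK⟩)
  · -- claw-free branch: a stable set of size 3 is impossible
    have hfin : S.Finite := S.toFinite
    have h1 : S.Nonempty := by
      rcases S.eq_empty_or_nonempty with h'|h'
      · simp [h', Set.ncard_empty] at hScard
      · exact h'
    obtain ⟨a, ha⟩ := h1
    have h2 : 1 < (S \ {a}).ncard := by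
      have := Set.ncard_diff_singleton_of_mem ha
      omega
    obtain ⟨b, c, hb', hc', hbc⟩ := (Set.one_lt_ncard_iff hfin.diff).mp h2
    have hb := hb'.1
    have hc := hc'.1
    have hab : a ≠ b := fun h => hb'.2 (Set.mem_singleton_iff.mpr h.symm)
    have hac : a ≠ c := fun h => hc'.2 (Set.mem_singleton_iff.mpr h.symm)
    have hAab := hS ha hb hab
    have hAac := hS ha hc hac
    have hAbc := hS hb hc hbc
    -- if one of them is outside A ∪ B, all are, giving a claw at x₀
    have hstep : ∀ z w : V, G.AntiAdj z w → z ∉ A ∪ B → w ∉ A ∪ B := by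
      intro z w hzw hz hw
      have h1 := (hOut z hz).2 w hw
      have h2 := antiAdj_nonpos hzw
      omega
    by_cases haAB : a ∈ A ∪ B
    · by_cases hbAB : b ∈ A ∪ B
      · have hcAB : c ∈ A ∪ B := by
          by_contra hcAB
          exact (hstep c a (antiAdj_symm hAac) hcAB) haAB
        -- all three in A ∪ B: impossible
        have hsplitAB : ∀ z w : V, G.AntiAdj z w → z ∈ A ∪ B → w ∈ A ∪ B →
            (z ∈ A ∧ w ∈ B) ∨ (z ∈ B ∧ w ∈ A) := by
          intro z w hzw hz hw
          rcases hz with hz|hz <;> rcases hw with hw|hw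
          · have := clique_theta hcliqA hz hw hzw.1
            have := antiAdj_nonpos hzw; omega
          · exact Or.inl ⟨hz, hw⟩
          · exact Or.inr ⟨hz, hw⟩
          · have := clique_theta hcliqB hz hw hzw.1
            have := antiAdj_nonpos hzw; omega
        have hnAB : ∀ z : V, z ∈ A → z ∈ B → False := fun z h1 h2 =>
          ne_of_mem_disjoint hd h1 h2 rfl
        rcases hsplitAB a b hAab haAB hbAB with ⟨h1, h2⟩|⟨h1, h2⟩ <;>
          rcases hsplitAB a c hAac haAB hcAB with ⟨h3, h4⟩|⟨h3, h4⟩ <;>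
          rcases hsplitAB b c hAbc hbAB hcAB with ⟨h5, h6⟩|⟨h5, h6⟩ <;>
          first
            | exact hnAB a h1 h3
            | exact hnAB a h3 h1
            | exact hnAB b h5 h2
            | exact hnAB b h1 h2
            | exact hnAB b h2 h5
            | exact hnAB c h4 h6
            | exact hnAB c h6 h4
      · exact (hstep b a (antiAdj_symm hAab) hbAB) haAB
    · have hbAB : b ∉ A ∪ B := hstep a b hAab haAB
      have hcAB : c ∉ A ∪ B := hstep a c hAac haAB
      refine hcf ⟨x₀, a, b, c, ?_, ?_, ?_, hAab, hAac, hAbc⟩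
      · refine ⟨fun h => haAB (h ▸ Or.inl hx₀), Or.inl ?_⟩
        rw [G.symm]; exact (hOut a haAB).2 x₀ (Or.inl hx₀)
      · refine ⟨fun h => hbAB (h ▸ Or.inl hx₀), Or.inl ?_⟩
        rw [G.symm]; exact (hOut b hbAB).2 x₀ (Or.inl hx₀)
      · refine ⟨fun h => hcAB (h ▸ Or.inl hx₀), Or.inl ?_⟩
        rw [G.symm]; exact (hOut c hcAB).2 x₀ (Or.inl hx₀)

end SC11

/-- In an optimal antithickening of a connected non-degenerate trigraph,
every square-connected homogeneous pair of strong cliques is contained in the preimages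
of a semiadjacent pair of vertices. -/
theorem squareConnected_contained_in_semiedge {V V' : Type} [Fintype V] [Fintype V']
    (G : Trigraph V) (hconn : G.Connected) (hnd : G.NonDegenerate)
    (A B : Set V) (hAB : G.SquareConnected A B)
    (G' : Trigraph V') (I : V' → Set V) (hopt : G.OptimalAntithickening G' I) :
    ∃ a b : V', G'.SemiAdj a b ∧ A ⊆ I a ∧ B ⊆ I b := by
  classical
  open SC11 in
  obtain ⟨⟨hcl, hdisj, hcover, hrel⟩, hlam, -⟩ := hopt
  have hcf : G.ClawFree := SC11.clawfree_of_nondegenerate hnd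
  -- the class map
  have hex : ∀ x : V, ∃ p : V', x ∈ I p := by
    intro x
    have hx : x ∈ ⋃ v, I v := by rw [hcover]; trivial
    exact Set.mem_iUnion.mp hx
  choose π hπ using hex
  have hclass : ∀ (x : V) (p : V'), x ∈ I p → π x = p := by
    intro x p hx
    by_contra hne
    exact Set.disjoint_left.mp (hdisj _ _ hne) (hπ x) hx
  have hIcl : ∀ (p : V') (x y : V), x ∈ I p → y ∈ I p → x ≠ y → G.θ x y = 1 :=
    fun p x y hx hy hne => (hcl p).2 hx hy hne
  have hIne : ∀ (p q : V') (x y : V), p ≠ q → x ∈ I p → y ∈ I q → x ≠ y := by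
    rintro p q x y hpq hx hy rfl
    exact Set.disjoint_left.mp (hdisj p q hpq) hx hy
  -- transfer lemmas for θ'
  have L2 : ∀ (p q : V') (x y : V), p ≠ q → x ∈ I p → y ∈ I q → G.θ x y ≤ 0 →
      G'.θ p q ≠ 1 := by
    intro p q x y hpq hx hy hθ h1
    have h2 : G.θ x y = 1 := (hrel p q hpq).1 h1 x hx y hy
    omega
  have L1 : ∀ (p q : V') (x y : V), p ≠ q → x ∈ I p → y ∈ I q → 0 ≤ G.θ x y →
      G'.θ p q ≠ -1 := by
    intro p q x y hpq hx hy hθ h1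
    have h2 : G.θ x y = -1 := (hrel p q hpq).2.1 h1 x hx y hy
    omega
  have Lzero : ∀ (p q : V'), G'.θ p q ≠ 1 → G'.θ p q ≠ -1 → G'.θ p q = 0 := by
    intro p q h1 h2
    rcases G'.range_mem p q with h|h|h <;> omega
  have Lsc : ∀ (p q : V') (x y : V), p ≠ q → x ∈ I p → y ∈ I q → G'.θ p q = 1 →
      G.θ x y = 1 := fun p q x y hpq hx hy h1 => (hrel p q hpq).1 h1 x hx y hy
  have Lsanti : ∀ (p q : V') (x y : V), p ≠ q → x ∈ I p → y ∈ I q → G'.θ p q = -1 →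
      G.θ x y = -1 := fun p q x y hpq hx hy h1 => (hrel p q hpq).2.1 h1 x hx y hy
  -- no class meets both sides of a square-connected pair
  have hstraddle : ∀ (P Q : Set V), G.SquareConnected P Q → ∀ (p : V') (x y : V),
      x ∈ I p → y ∈ I p → x ∈ P → y ∈ Q → False := by
    intro P Q hsc p x y hxI hyI hxP hyQ
    have hdPQ := hsc.1.2.2.1
    have hcliqP := hsc.1.2.2.2.1
    have hcliqQ := hsc.1.2.2.2.2.1
    have hxy : x ≠ y := SC11.ne_of_mem_disjoint hdPQ hxP hyQ
    have hθxy : G.θ x y = 1 := hIcl p x y hxI hyI hxy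
    obtain ⟨⟨yt, hytQ, hyt⟩, -⟩ := SC11.partners hsc x hxP
    obtain ⟨⟨xt, hxtP, hxt⟩, -⟩ := SC11.partners (SC11.SC_symm hsc) y hyQ
    have hyyt : y ≠ yt := by rintro rfl; omega
    have hxxt : x ≠ xt := by
      rintro rfl
      have h2 : G.θ y x = 1 := (G.symm y x).trans hθxy
      omega
    have hpyt : π yt ≠ p := by
      intro h
      have h1 : yt ∈ I p := h ▸ hπ yt
      have := hIcl p x yt hxI h1 (SC11.ne_of_mem_disjoint hdPQ hxP hytQ)
      omega
    have hpxt : π xt ≠ p := by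
      intro h
      have h1 : xt ∈ I p := h ▸ hπ xt
      have h2 := hIcl p y xt hyI h1 (fun h' => SC11.ne_of_mem_disjoint hdPQ hxtP hyQ h'.symm)
      omega
    have hsemi1 : G'.θ p (π yt) = 0 := by
      refine Lzero _ _ (L2 p (π yt) x yt hpyt.symm hxI (hπ yt) hyt) ?_
      refine L1 p (π yt) y yt hpyt.symm hyI (hπ yt) ?_
      have := SC11.clique_theta hcliqQ hyQ hytQ hyyt
      omega
    have hsemi2 : G'.θ p (π xt) = 0 := by
      refine Lzero _ _ (L2 p (π xt) y xt hpxt.symm hyI (hπ xt) hxt) ?_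
      refine L1 p (π xt) x xt hpxt.symm hxI (hπ xt) ?_
      have := SC11.clique_theta hcliqP hxP hxtP hxxt
      omega
    have heq : π yt = π xt := by
      by_contra hne
      exact G'.semi_matching p (π yt) (π xt) hpyt.symm hpxt.symm hne hsemi1 hsemi2
    obtain ⟨v₀, hv₀, htype⟩ := SC11.exists_mixed hconn hnd hsc
    rcases htype with ⟨hv₀P, hv₀Q⟩ | ⟨hv₀P, hv₀Q⟩
    · -- v₀ strongly complete to P, strongly anticomplete to Q
      have hm1 : π v₀ ≠ p := by
        intro h
        have h1 : v₀ ∈ I p := h ▸ hπ v₀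
        have h2 := hIcl p v₀ y h1 hyI (fun h' => hv₀ (h' ▸ Or.inr hyQ))
        have := hv₀Q y hyQ; omega
      have hm2 : π v₀ ≠ π yt := by
        intro h
        have h1 : v₀ ∈ I (π yt) := h ▸ hπ v₀
        have h2 := hIcl (π yt) v₀ yt h1 (hπ yt) (fun h' => hv₀ (h' ▸ Or.inr hytQ))
        have := hv₀Q yt hytQ; omega
      have hsemi3 : G'.θ p (π v₀) = 0 := by
        refine Lzero _ _ ?_ ?_
        · refine L2 p (π v₀) y v₀ hm1.symm hyI (hπ v₀) ?_
          have := hv₀Q y hyQ; rw [G.symm]; omega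
        · refine L1 p (π v₀) x v₀ hm1.symm hxI (hπ v₀) ?_
          have := hv₀P x hxP; rw [G.symm]; omega
      exact G'.semi_matching p (π yt) (π v₀) hpyt.symm hm1.symm (fun h => hm2 h.symm)
        hsemi1 hsemi3
    · -- v₀ strongly anticomplete to P, strongly complete to Q
      have hm1 : π v₀ ≠ p := by
        intro h
        have h1 : v₀ ∈ I p := h ▸ hπ v₀
        have h2 := hIcl p v₀ x h1 hxI (fun h' => hv₀ (h' ▸ Or.inl hxP))
        have := hv₀P x hxP; omega
      have hm2 : π v₀ ≠ π xt := by
        intro h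
        have h1 : v₀ ∈ I (π xt) := h ▸ hπ v₀
        have h2 := hIcl (π xt) v₀ xt h1 (hπ xt) (fun h' => hv₀ (h' ▸ Or.inl hxtP))
        have := hv₀P xt hxtP; omega
      have hsemi3 : G'.θ p (π v₀) = 0 := by
        refine Lzero _ _ ?_ ?_
        · refine L2 p (π v₀) x v₀ hm1.symm hxI (hπ v₀) ?_
          have := hv₀P x hxP; rw [G.symm]; omega
        · refine L1 p (π v₀) y v₀ hm1.symm hyI (hπ v₀) ?_
          have := hv₀Q y hyQ; rw [G.symm]; omega
      exact G'.semi_matching p (π xt) (π v₀) hpxt.symm hm1.symm (fun h => hm2 h.symm)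
        hsemi2 hsemi3
  -- classes meeting the same side of the pair are strongly adjacent in G'
  have hcliq : ∀ (P Q : Set V), G.SquareConnected P Q → ∀ (p q : V'), p ≠ q →
      ∀ x x' : V, x ∈ I p → x ∈ P → x' ∈ I q → x' ∈ P → G'.θ p q = 1 := by
    intro P Q hsc p q hpq x x' hxI hxP hx'I hx'P
    have hdPQ := hsc.1.2.2.1
    have hcliqP := hsc.1.2.2.2.1
    have hhomog := hsc.1.2.2.2.2.2.2
    have hxx' : x ≠ x' := hIne p q x x' hpq hxI hx'I
    by_contra h1
    have hθ0 : G'.θ p q = 0 := by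
      refine Lzero _ _ h1 ?_
      refine L1 p q x x' hpq hxI hx'I ?_
      have := SC11.clique_theta hcliqP hxP hx'P hxx'
      omega
    have hns : ¬ G.StronglyComplete (I p) (I q) := ((hrel p q hpq).2.2 ⟨hpq, hθ0⟩).1
    simp only [Trigraph.StronglyComplete] at hns
    push_neg at hns
    obtain ⟨f, hf, g, hg, hfg⟩ := hns
    have hfg' : G.θ f g ≤ 0 := by
      have := G.range_mem f g
      simp only [Trigraph.StrongAdj] at hfg
      omega
    have hfQ : f ∉ Q := fun hfQ => hstraddle P Q hsc p x f hxI hf hxP hfQ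
    have hgQ : g ∉ Q := fun hgQ => hstraddle P Q hsc q x' g hx'I hg hx'P hgQ
    by_cases hfP : f ∈ P <;> by_cases hgP : g ∈ P
    · have := SC11.clique_theta hcliqP hfP hgP (hIne p q f g hpq hf hg)
      omega
    · have hgout : g ∉ P ∪ Q := by rintro (h|h); exacts [hgP h, hgQ h]
      rcases (hhomog g hgout).1 with h|h
      · have h2 : G.θ g f = 1 := h g rfl f hfP
        rw [G.symm] at h2; omega
      · have h2 : G.θ g x' = -1 := h g rfl x' hx'P
        have h3 := hIcl q g x' hg hx'I (fun h' => hgP (h' ▸ hx'P))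
        omega
    · have hfout : f ∉ P ∪ Q := by rintro (h|h); exacts [hfP h, hfQ h]
      rcases (hhomog f hfout).1 with h|h
      · have h2 : G.θ f g = 1 := h f rfl g hgP
        omega
      · have h2 : G.θ f x = -1 := h f rfl x hxP
        have h3 := hIcl p f x hf hxI (fun h' => hfP (h' ▸ hxP))
        omega
    · -- both f and g outside: they are strongly complete to P and
      -- strongly anticomplete to Q, giving a claw at x
      have hfout : f ∉ P ∪ Q := by rintro (h|h); exacts [hfP h, hfQ h]
      have hgout : g ∉ P ∪ Q := by rintro (h|h); exacts [hgP h, hgQ h]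
      have hfA : ∀ z ∈ P, G.θ f z = 1 := by
        rcases (hhomog f hfout).1 with h|h
        · exact fun z hz => h f rfl z hz
        · have h2 : G.θ f x = -1 := h f rfl x hxP
          have h3 := hIcl p f x hf hxI (fun h' => hfP (h' ▸ hxP))
          omega
      have hgA : ∀ z ∈ P, G.θ g z = 1 := by
        rcases (hhomog g hgout).1 with h|h
        · exact fun z hz => h g rfl z hz
        · have h2 : G.θ g x' = -1 := h g rfl x' hx'P
          have h3 := hIcl q g x' hg hx'I (fun h' => hgP (h' ▸ hx'P))
          omega
      obtain ⟨⟨yt, hytQ, hyt⟩, ⟨yo, hyoQ, hyo⟩⟩ := SC11.partners hsc x hxP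
      have hpyt : π yt ≠ p := fun h => hstraddle P Q hsc p x yt hxI (h ▸ hπ yt) hxP hytQ
      have hqyt : π yt ≠ q := fun h => hstraddle P Q hsc q x' yt hx'I (h ▸ hπ yt) hx'P hytQ
      have hfB : ∀ z ∈ Q, G.θ f z = -1 := by
        rcases (hhomog f hfout).2 with h|h
        · exfalso
          have hsm : G'.θ p (π yt) = 0 := by
            refine Lzero _ _ (L2 p (π yt) x yt hpyt.symm hxI (hπ yt) hyt) ?_
            refine L1 p (π yt) f yt hpyt.symm hf (hπ yt) ?_
            have h5 : G.θ f yt = 1 := h f rfl yt hytQ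
            omega
          exact G'.semi_matching p q (π yt) hpq hpyt.symm hqyt.symm hθ0 hsm
        · exact fun z hz => h f rfl z hz
      have hgB : ∀ z ∈ Q, G.θ g z = -1 := by
        rcases (hhomog g hgout).2 with h|h
        · exfalso
          obtain ⟨⟨yt', hyt'Q, hyt'⟩, -⟩ := SC11.partners hsc x' hx'P
          have hpyt' : π yt' ≠ p :=
            fun h' => hstraddle P Q hsc p x yt' hxI (h' ▸ hπ yt') hxP hyt'Q
          have hqyt' : π yt' ≠ q :=
            fun h' => hstraddle P Q hsc q x' yt' hx'I (h' ▸ hπ yt') hx'P hyt'Q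
          have hθ0' : G'.θ q p = 0 := (G'.symm q p).trans hθ0
          have hsm : G'.θ q (π yt') = 0 := by
            refine Lzero _ _ (L2 q (π yt') x' yt' hqyt'.symm hx'I (hπ yt') hyt') ?_
            refine L1 q (π yt') g yt' hqyt'.symm hg (hπ yt') ?_
            have h5 : G.θ g yt' = 1 := h g rfl yt' hyt'Q
            omega
          exact G'.semi_matching q p (π yt') (Ne.symm hpq) hqyt'.symm hpyt'.symm hθ0' hsm
        · exact fun z hz => h g rfl z hz
      refine hcf ⟨x, f, g, yo, ?_, ?_, ?_, ?_, ?_, ?_⟩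
      · exact ⟨fun h => hfP (h ▸ hxP), Or.inl (hIcl p x f hxI hf (fun h => hfP (h ▸ hxP)))⟩
      · refine ⟨fun h => hgP (h ▸ hxP), Or.inl ?_⟩
        rw [G.symm]; exact hgA x hxP
      · exact SC11.adj_of_nonneg (SC11.ne_of_mem_disjoint hdPQ hxP hyoQ) hyo
      · exact SC11.antiAdj_of_nonpos (hIne p q f g hpq hf hg) hfg'
      · exact ⟨fun h => hfQ (h ▸ hyoQ), Or.inr (hfB yo hyoQ)⟩
      · exact ⟨fun h => hgQ (h ▸ hyoQ), Or.inr (hgB yo hyoQ)⟩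
  -- no semiedge of G' joins a class disjoint from P ∪ Q to a class meeting P
  have hnosemi : ∀ (P Q : Set V), G.SquareConnected P Q → ∀ (w p : V'),
      I w ∩ P = ∅ → I w ∩ Q = ∅ → (I p ∩ P).Nonempty → G'.θ w p ≠ 0 := by
    intro P Q hsc w p hwP hwQ hpP h0
    obtain ⟨x₀, hx₀I, hx₀P⟩ := hpP
    have hhomog := hsc.1.2.2.2.2.2.2
    have hwp : w ≠ p := by
      rintro rfl
      exact (Set.eq_empty_iff_forall_notMem.mp hwP x₀) ⟨hx₀I, hx₀P⟩
    have hwout : ∀ z ∈ I w, z ∉ P ∪ Q := by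
      rintro z hz (h|h)
      · exact (Set.eq_empty_iff_forall_notMem.mp hwP z) ⟨hz, h⟩
      · exact (Set.eq_empty_iff_forall_notMem.mp hwQ z) ⟨hz, h⟩
    obtain ⟨⟨yt, hytQ, hyt⟩, ⟨yo, hyoQ, hyo⟩⟩ := SC11.partners hsc x₀ hx₀P
    have hpyt : π yt ≠ p := fun h => hstraddle P Q hsc p x₀ yt hx₀I (h ▸ hπ yt) hx₀P hytQ
    have hpyo : π yo ≠ p := fun h => hstraddle P Q hsc p x₀ yo hx₀I (h ▸ hπ yo) hx₀P hyoQ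
    have hwyt : π yt ≠ w :=
      fun h => (Set.eq_empty_iff_forall_notMem.mp hwQ yt) ⟨h ▸ hπ yt, hytQ⟩
    have hwyo : π yo ≠ w :=
      fun h => (Set.eq_empty_iff_forall_notMem.mp hwQ yo) ⟨h ▸ hπ yo, hyoQ⟩
    have h0' : G'.θ p w = 0 := (G'.symm p w).trans h0
    by_cases hsub : ∀ g ∈ I p, g ∈ P
    · -- the class of p is contained in P
      have hns := (hrel w p hwp).2.2 ⟨hwp, h0⟩
      have hnsc := hns.1
      have hnsanti := hns.2
      simp only [Trigraph.StronglyComplete] at hnsc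
      push_neg at hnsc
      obtain ⟨em, hem, gm, hgm, hgm1⟩ := hnsc
      simp only [Trigraph.StronglyAnticomplete] at hnsanti
      push_neg at hnsanti
      obtain ⟨ep, hep, gp, hgp, hgp1⟩ := hnsanti
      have hgmP : gm ∈ P := hsub gm hgm
      have hgpP : gp ∈ P := hsub gp hgp
      have hemout : em ∉ P ∪ Q := hwout em hem
      have hepout : ep ∉ P ∪ Q := hwout ep hep
      have hemA : ∀ z ∈ P, G.θ em z = -1 := by
        rcases (hhomog em hemout).1 with h|h
        · exact absurd (h em rfl gm hgmP) hgm1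
        · exact fun z hz => h em rfl z hz
      have hepA : ∀ z ∈ P, G.θ ep z = 1 := by
        rcases (hhomog ep hepout).1 with h|h
        · exact fun z hz => h ep rfl z hz
        · have h2 : G.θ ep gp = -1 := h ep rfl gp hgpP
          exact absurd h2 hgp1
      by_cases hsp : ∃ p₁ : V', (I p₁ ∩ P).Nonempty ∧ p₁ ≠ p
      · obtain ⟨p₁, ⟨x₁, hx₁I, hx₁P⟩, hne⟩ := hsp
        have hwp₁ : w ≠ p₁ := by
          rintro rfl
          exact (Set.eq_empty_iff_forall_notMem.mp hwP x₁) ⟨hx₁I, hx₁P⟩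
        have hsm : G'.θ w p₁ = 0 := by
          refine Lzero _ _ ?_ ?_
          · refine L2 w p₁ em x₁ hwp₁ hem hx₁I ?_
            have := hemA x₁ hx₁P; omega
          · refine L1 w p₁ ep x₁ hwp₁ hep hx₁I ?_
            have := hepA x₁ hx₁P; omega
        exact G'.semi_matching w p p₁ hwp hwp₁ hne.symm h0 hsm
      · push_neg at hsp
        have hPsub : ∀ z ∈ P, z ∈ I p := by
          intro z hz
          have h1 : (I (π z) ∩ P).Nonempty := ⟨z, hπ z, hz⟩
          have h2 : π z = p := by
            by_contra hcon
            exact hcon (hsp (π z) h1)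
          exact h2 ▸ hπ z
        obtain ⟨w1, w2, w3, w4, hsq0, hsub0⟩ := SC11.exists_square hsc
        obtain ⟨a1, a2, b1, b2, ha1, ha2, hb1, hb2, -, -, hθ11, -, -, hθ21, -⟩ :=
          SC11.square_decomp hsc.1.2.2.2.1 hsc.1.2.2.2.2.1 hsc.1.2.2.1 hsq0 hsub0
        have hpb1 : π b1 ≠ p :=
          fun h => hstraddle P Q hsc p x₀ b1 hx₀I (h ▸ hπ b1) hx₀P hb1
        have hwb1 : π b1 ≠ w :=
          fun h => (Set.eq_empty_iff_forall_notMem.mp hwQ b1) ⟨h ▸ hπ b1, hb1⟩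
        have hsm : G'.θ p (π b1) = 0 := by
          refine Lzero _ _ ?_ ?_
          · exact L2 p (π b1) a1 b1 hpb1.symm (hPsub a1 ha1) (hπ b1) hθ11
          · exact L1 p (π b1) a2 b1 hpb1.symm (hPsub a2 ha2) (hπ b1) hθ21
        exact G'.semi_matching p w (π b1) hwp.symm hpb1.symm hwb1.symm h0' hsm
    · -- the class of p contains a vertex outside P ∪ Q
      push_neg at hsub
      obtain ⟨u₀, hu₀I, hu₀P⟩ := hsub
      have hu₀Q : u₀ ∉ Q := fun h => hstraddle P Q hsc p x₀ u₀ hx₀I hu₀I hx₀P h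
      have hu₀out : u₀ ∉ P ∪ Q := by rintro (h|h); exacts [hu₀P h, hu₀Q h]
      have h1 : G'.θ p (π yt) = -1 := by
        have hne1 := L2 p (π yt) x₀ yt hpyt.symm hx₀I (hπ yt) hyt
        have hne0 := G'.semi_matching p w (π yt) hwp.symm hpyt.symm hwyt.symm h0'
        rcases G'.range_mem p (π yt) with h|h|h <;> omega
      have h2 : G'.θ p (π yo) = 1 := by
        have hne1 := L1 p (π yo) x₀ yo hpyo.symm hx₀I (hπ yo) hyo
        have hne0 := G'.semi_matching p w (π yo) hwp.symm hpyo.symm hwyo.symm h0'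
        rcases G'.range_mem p (π yo) with h|h|h <;> omega
      have h3 : G.θ u₀ yt = -1 := Lsanti p (π yt) u₀ yt hpyt.symm hu₀I (hπ yt) h1
      have h4 : G.θ u₀ yo = 1 := Lsc p (π yo) u₀ yo hpyo.symm hu₀I (hπ yo) h2
      rcases (hhomog u₀ hu₀out).2 with h|h
      · have h5 : G.θ u₀ yt = 1 := h u₀ rfl yt hytQ
        omega
      · have h5 : G.θ u₀ yo = -1 := h u₀ rfl yo hyoQ
        omega
  -- transfer of squares to G'
  have hsqt : ∀ (P Q : Set V), G.SquareConnected P Q → ∀ (P1 P2 : Set V'),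
      P1.Nonempty → P2.Nonempty → P1 ∪ P2 = {p : V' | (I p ∩ P).Nonempty} →
      Disjoint P1 P2 →
      G'.SquareMeets ({p : V' | (I p ∩ P).Nonempty} ∪ {p : V' | (I p ∩ Q).Nonempty})
        P1 P2 := by
    intro P Q hsc P1 P2 hP1 hP2 hunP hdP
    have hdPQ := hsc.1.2.2.1
    have hcliqP := hsc.1.2.2.2.1
    have hcliqQ := hsc.1.2.2.2.2.1
    have main : ∀ c1 c2 d1 d2 : V, c1 ∈ P → c2 ∈ P → d1 ∈ Q → d2 ∈ Q →
        G.θ c1 d1 ≤ 0 → G.θ c2 d2 ≤ 0 → 0 ≤ G.θ c1 d2 → 0 ≤ G.θ c2 d1 →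
        c1 ≠ c2 → d1 ≠ d2 → π c1 ∈ P1 → π c2 ∈ P2 →
        G'.SquareMeets ({p : V' | (I p ∩ P).Nonempty} ∪ {p : V' | (I p ∩ Q).Nonempty})
          P1 P2 := by
      intro c1 c2 d1 d2 hc1 hc2 hd1 hd2 hθ11 hθ22 hθ12 hθ21 hcc hdd hπ1 hπ2
      have hq12 : π c1 ≠ π c2 := by
        intro h
        exact Set.disjoint_left.mp hdP hπ1 (h ▸ hπ2)
      have hst : ∀ (c d : V), c ∈ P → d ∈ Q → π c ≠ π d := by
        intro c d hc hd h
        exact hstraddle P Q hsc (π c) c d (hπ c) (h ▸ hπ d) hc hd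
      have hs12 : π d1 ≠ π d2 := by
        intro h
        have hA : G'.θ (π c1) (π d1) = 0 := by
          refine Lzero _ _ (L2 _ _ c1 d1 (hst c1 d1 hc1 hd1) (hπ c1) (hπ d1) hθ11) ?_
          exact L1 _ _ c1 d2 (hst c1 d1 hc1 hd1) (hπ c1) (by rw [h]; exact hπ d2) hθ12
        have hB : G'.θ (π c2) (π d1) = 0 := by
          refine Lzero _ _ ?_ (L1 _ _ c2 d1 (hst c2 d1 hc2 hd1) (hπ c2) (hπ d1) hθ21)
          exact L2 _ _ c2 d2 (hst c2 d1 hc2 hd1) (hπ c2) (by rw [h]; exact hπ d2) hθ22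
        have hA' : G'.θ (π d1) (π c1) = 0 := (G'.symm _ _).trans hA
        have hB' : G'.θ (π d1) (π c2) = 0 := (G'.symm _ _).trans hB
        exact G'.semi_matching (π d1) (π c1) (π c2) (hst c1 d1 hc1 hd1).symm
          (hst c2 d1 hc2 hd1).symm hq12 hA' hB'
      refine ⟨π c1, π c2, π d1, π d2, ⟨?_, ?_, ?_, ?_, ?_, ?_⟩, ?_, ?_, ?_⟩
      · refine SC11.antiAdj_of_nonpos (hst c1 d1 hc1 hd1) ?_
        have := L2 _ _ c1 d1 (hst c1 d1 hc1 hd1) (hπ c1) (hπ d1) hθ11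
        rcases G'.range_mem (π c1) (π d1) with h|h|h <;> omega
      · refine SC11.antiAdj_of_nonpos (hst c2 d2 hc2 hd2) ?_
        have := L2 _ _ c2 d2 (hst c2 d2 hc2 hd2) (hπ c2) (hπ d2) hθ22
        rcases G'.range_mem (π c2) (π d2) with h|h|h <;> omega
      · refine SC11.adj_of_nonneg hq12 ?_
        have h5 : G.θ c1 c2 = 1 := SC11.clique_theta hcliqP hc1 hc2 hcc
        have := L1 _ _ c1 c2 hq12 (hπ c1) (hπ c2) (by omega)
        rcases G'.range_mem (π c1) (π c2) with h|h|h <;> omega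
      · refine SC11.adj_of_nonneg (hst c2 d1 hc2 hd1) ?_
        have := L1 _ _ c2 d1 (hst c2 d1 hc2 hd1) (hπ c2) (hπ d1) hθ21
        rcases G'.range_mem (π c2) (π d1) with h|h|h <;> omega
      · refine SC11.adj_of_nonneg hs12 ?_
        have h5 : G.θ d1 d2 = 1 := SC11.clique_theta hcliqQ hd1 hd2 hdd
        have := L1 _ _ d1 d2 hs12 (hπ d1) (hπ d2) (by omega)
        rcases G'.range_mem (π d1) (π d2) with h|h|h <;> omega
      · refine SC11.adj_of_nonneg (hst c1 d2 hc1 hd2).symm ?_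
        have h5 : 0 ≤ G.θ d2 c1 := by rw [G.symm]; omega
        have := L1 _ _ d2 c1 (hst c1 d2 hc1 hd2).symm (hπ d2) (hπ c1) h5
        rcases G'.range_mem (π d2) (π c1) with h|h|h <;> omega
      · rintro z (rfl|rfl|rfl|hz)
        · exact Or.inl ⟨c1, hπ c1, hc1⟩
        · exact Or.inl ⟨c2, hπ c2, hc2⟩
        · exact Or.inr ⟨d1, hπ d1, hd1⟩
        · rw [Set.mem_singleton_iff] at hz
          subst hz
          exact Or.inr ⟨d2, hπ d2, hd2⟩
      · exact ⟨π c1, Or.inl rfl, hπ1⟩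
      · exact ⟨π c2, Or.inr (Or.inl rfl), hπ2⟩
    -- build the partition of P and obtain a crossing square
    set A1 : Set V := {z | z ∈ P ∧ π z ∈ P1} with hA1
    set A2 : Set V := {z | z ∈ P ∧ π z ∈ P2} with hA2
    have hA1ne : A1.Nonempty := by
      obtain ⟨p1, hp1⟩ := hP1
      have hmem : p1 ∈ P1 ∪ P2 := Or.inl hp1
      rw [hunP] at hmem
      obtain ⟨x, hxI, hxP⟩ := hmem
      exact ⟨x, hxP, (hclass x p1 hxI) ▸ hp1⟩
    have hA2ne : A2.Nonempty := by
      obtain ⟨p2, hp2⟩ := hP2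
      have hmem : p2 ∈ P1 ∪ P2 := Or.inr hp2
      rw [hunP] at hmem
      obtain ⟨x, hxI, hxP⟩ := hmem
      exact ⟨x, hxP, (hclass x p2 hxI) ▸ hp2⟩
    have hA12 : A1 ∪ A2 = P := by
      ext z
      simp only [Set.mem_union, hA1, hA2, Set.mem_setOf_eq]
      constructor
      · rintro (⟨h, -⟩|⟨h, -⟩) <;> exact h
      · intro hz
        have hmem : π z ∈ P1 ∪ P2 := by
          rw [hunP]; exact ⟨z, hπ z, hz⟩
        rcases hmem with h|h
        · exact Or.inl ⟨hz, h⟩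
        · exact Or.inr ⟨hz, h⟩
    have hA12d : Disjoint A1 A2 := by
      rw [Set.disjoint_left]
      rintro z ⟨-, h1⟩ ⟨-, h2⟩
      exact Set.disjoint_left.mp hdP h1 h2
    obtain ⟨v1, v2, v3, v4, hsq, hsub, hm1, hm2⟩ := hsc.2.1 A1 A2 hA1ne hA2ne hA12 hA12d
    obtain ⟨a1, a2, b1, b2, ha1, ha2, hb1, hb2, ha12, hb12, hθ11, hθ22, hθ12, hθ21, hset⟩ :=
      SC11.square_decomp hcliqP hcliqQ hdPQ hsq hsub
    obtain ⟨z1, hz1sq, hz1⟩ := hm1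
    obtain ⟨z2, hz2sq, hz2⟩ := hm2
    rw [hset] at hz1sq hz2sq
    have hz1P : z1 ∈ P := hz1.1
    have hz2P : z2 ∈ P := hz2.1
    have hnotQ : ∀ z : V, z ∈ P → z ∉ Q := fun z h1 h2 =>
      SC11.ne_of_mem_disjoint hdPQ h1 h2 rfl
    have hz1a : z1 = a1 ∨ z1 = a2 := by
      rcases hz1sq with h|h|h|h
      · exact Or.inl h
      · exact Or.inr h
      · exact absurd hb1 (h ▸ hnotQ z1 hz1P)
      · rw [Set.mem_singleton_iff] at h
        exact absurd hb2 (h ▸ hnotQ z1 hz1P)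
    have hz2a : z2 = a1 ∨ z2 = a2 := by
      rcases hz2sq with h|h|h|h
      · exact Or.inl h
      · exact Or.inr h
      · exact absurd hb1 (h ▸ hnotQ z2 hz2P)
      · rw [Set.mem_singleton_iff] at h
        exact absurd hb2 (h ▸ hnotQ z2 hz2P)
    have hz12 : z1 ≠ z2 := by
      rintro rfl
      exact Set.disjoint_left.mp hdP hz1.2 hz2.2
    rcases hz1a with rfl|rfl <;> rcases hz2a with rfl|rfl
    · exact absurd rfl hz12
    · exact main z1 z2 b1 b2 ha1 ha2 hb1 hb2 hθ11 hθ22 hθ12 hθ21 ha12 hb12 hz1.2 hz2.2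
    · refine main z1 z2 b2 b1 ha2 ha1 hb2 hb1 hθ22 hθ11 hθ21 hθ12 ha12.symm hb12.symm
        hz1.2 hz2.2
    · exact absurd rfl hz12
  -- final assembly
  obtain ⟨x₀, hx₀⟩ := hAB.1.1
  obtain ⟨y₀, hy₀⟩ := hAB.1.2.1
  have hhomogG := hAB.1.2.2.2.2.2.2
  obtain ⟨⟨yt₀, hyt₀, hyt₀v⟩, ⟨yo₀, hyo₀, hyo₀v⟩⟩ := SC11.partners hAB x₀ hx₀
  by_cases hsplit : (∃ p q : V', (I p ∩ A).Nonempty ∧ (I q ∩ A).Nonempty ∧ p ≠ q) ∨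
      (∃ p q : V', (I p ∩ B).Nonempty ∧ (I q ∩ B).Nonempty ∧ p ≠ q)
  · -- split case: the images of A and B form a square-connected pair in G',
    -- contradicting laminarity
    exfalso
    apply hlam
    refine ⟨{p : V' | (I p ∩ A).Nonempty}, {p : V' | (I p ∩ B).Nonempty},
      ⟨⟨π x₀, x₀, hπ x₀, hx₀⟩, ⟨π y₀, y₀, hπ y₀, hy₀⟩, ?_, ?_, ?_, ?_, ?_⟩, ?_, ?_⟩
    · -- disjointness
      rw [Set.disjoint_left]
      rintro p ⟨x, hxI, hxA⟩ ⟨y, hyI, hyB⟩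
      exact hstraddle A B hAB p x y hxI hyI hxA hyB
    · -- Ahat is a strong clique
      rintro p ⟨x, hxI, hxA⟩ q ⟨x', hx'I, hx'A⟩ hne
      exact hcliq A B hAB p q hne x x' hxI hxA hx'I hx'A
    · -- Bhat is a strong clique
      rintro p ⟨y, hyI, hyB⟩ q ⟨y', hy'I, hy'B⟩ hne
      exact hcliq B A (SC11.SC_symm hAB) p q hne y y' hyI hyB hy'I hy'B
    · -- not both singletons
      rintro ⟨a, b, hA1, hB1⟩
      rcases hsplit with ⟨p, q, hp, hq, hne⟩ | ⟨p, q, hp, hq, hne⟩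
      · have h1 : p ∈ ({a} : Set V') := hA1 ▸ hp
        have h2 : q ∈ ({a} : Set V') := hA1 ▸ hq
        rw [Set.mem_singleton_iff] at h1 h2
        exact hne (h1.trans h2.symm)
      · have h1 : p ∈ ({b} : Set V') := hB1 ▸ hp
        have h2 : q ∈ ({b} : Set V') := hB1 ▸ hq
        rw [Set.mem_singleton_iff] at h1 h2
        exact hne (h1.trans h2.symm)
    · -- homogeneity
      intro v hv
      have hvA : I v ∩ A = ∅ := by
        by_contra h
        exact hv (Or.inl (Set.nonempty_iff_ne_empty.mpr h))
      have hvB : I v ∩ B = ∅ := by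
        by_contra h
        exact hv (Or.inr (Set.nonempty_iff_ne_empty.mpr h))
      have hvout : ∀ z ∈ I v, z ∉ A ∪ B := by
        rintro z hz (h|h)
        · exact (Set.eq_empty_iff_forall_notMem.mp hvA z) ⟨hz, h⟩
        · exact (Set.eq_empty_iff_forall_notMem.mp hvB z) ⟨hz, h⟩
      constructor
      · -- strongly complete or anticomplete to Ahat
        by_cases hone : ∃ p, (I p ∩ A).Nonempty ∧ G'.θ v p = 1
        · left
          intro u hu p hp
          rw [Set.mem_singleton_iff] at hu
          rw [hu]
          have hvp : v ≠ p := by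
            rintro rfl
            obtain ⟨x, hxI, hxA⟩ := hp
            exact (Set.eq_empty_iff_forall_notMem.mp hvA x) ⟨hxI, hxA⟩
          obtain ⟨x, hxI, hxA⟩ := hp
          obtain ⟨p₁, ⟨x₁, hx₁I, hx₁A⟩, h1⟩ := hone
          have hvp₁ : v ≠ p₁ := by
            rintro rfl
            exact (Set.eq_empty_iff_forall_notMem.mp hvA x₁) ⟨hx₁I, hx₁A⟩
          have hne0 := hnosemi A B hAB v p hvA hvB ⟨x, hxI, hxA⟩
          have hnem1 : G'.θ v p ≠ -1 := by
            intro hm1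
            obtain ⟨e, he⟩ := (hcl v).1
            have h2 : G.θ e x = -1 := Lsanti v p e x hvp he hxI hm1
            have h3 : G.θ e x₁ = 1 := Lsc v p₁ e x₁ hvp₁ he hx₁I h1
            rcases (hhomogG e (hvout e he)).1 with h|h
            · have h4 : G.θ e x = 1 := h e rfl x hxA
              omega
            · have h4 : G.θ e x₁ = -1 := h e rfl x₁ hx₁A
              omega
          have := G'.range_mem v p
          show G'.θ v p = 1
          omega
        · right
          intro u hu p hp
          rw [Set.mem_singleton_iff] at hu
          rw [hu]
          have hvp : v ≠ p := by
            rintro rfl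
            obtain ⟨x, hxI, hxA⟩ := hp
            exact (Set.eq_empty_iff_forall_notMem.mp hvA x) ⟨hxI, hxA⟩
          have hne0 := hnosemi A B hAB v p hvA hvB hp
          have hne1 : G'.θ v p ≠ 1 := fun h1 => hone ⟨p, hp, h1⟩
          have := G'.range_mem v p
          show G'.θ v p = -1
          omega
      · -- strongly complete or anticomplete to Bhat
        by_cases hone : ∃ p, (I p ∩ B).Nonempty ∧ G'.θ v p = 1
        · left
          intro u hu p hp
          rw [Set.mem_singleton_iff] at hu
          rw [hu]
          have hvp : v ≠ p := by
            rintro rfl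
            obtain ⟨y, hyI, hyB⟩ := hp
            exact (Set.eq_empty_iff_forall_notMem.mp hvB y) ⟨hyI, hyB⟩
          obtain ⟨y, hyI, hyB⟩ := hp
          obtain ⟨p₁, ⟨y₁, hy₁I, hy₁B⟩, h1⟩ := hone
          have hvp₁ : v ≠ p₁ := by
            rintro rfl
            exact (Set.eq_empty_iff_forall_notMem.mp hvB y₁) ⟨hy₁I, hy₁B⟩
          have hne0 := hnosemi B A (SC11.SC_symm hAB) v p hvB hvA ⟨y, hyI, hyB⟩
          have hnem1 : G'.θ v p ≠ -1 := by
            intro hm1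
            obtain ⟨e, he⟩ := (hcl v).1
            have h2 : G.θ e y = -1 := Lsanti v p e y hvp he hyI hm1
            have h3 : G.θ e y₁ = 1 := Lsc v p₁ e y₁ hvp₁ he hy₁I h1
            rcases (hhomogG e (hvout e he)).2 with h|h
            · have h4 : G.θ e y = 1 := h e rfl y hyB
              omega
            · have h4 : G.θ e y₁ = -1 := h e rfl y₁ hy₁B
              omega
          have := G'.range_mem v p
          show G'.θ v p = 1
          omega
        · right
          intro u hu p hp
          rw [Set.mem_singleton_iff] at hu
          rw [hu]
          have hvp : v ≠ p := by
            rintro rfl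
            obtain ⟨y, hyI, hyB⟩ := hp
            exact (Set.eq_empty_iff_forall_notMem.mp hvB y) ⟨hyI, hyB⟩
          have hne0 := hnosemi B A (SC11.SC_symm hAB) v p hvB hvA hp
          have hne1 : G'.θ v p ≠ 1 := fun h1 => hone ⟨p, hp, h1⟩
          have := G'.range_mem v p
          show G'.θ v p = -1
          omega
    · -- square-connectedness: partitions of Ahat
      intro A' A'' h1 h2 hun hd
      exact hsqt A B hAB A' A'' h1 h2 hun hd
    · -- square-connectedness: partitions of Bhat
      intro B' B'' h1 h2 hun hd
      have := hsqt B A (SC11.SC_symm hAB) B' B'' h1 h2 hun hd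
      rwa [Set.union_comm] at this
  · -- no split: A and B are each contained in a single class
    push_neg at hsplit
    obtain ⟨hsA, hsB⟩ := hsplit
    have hsubA : A ⊆ I (π x₀) := by
      intro z hz
      have h1 : π z = π x₀ := hsA (π z) (π x₀) ⟨z, hπ z, hz⟩ ⟨x₀, hπ x₀, hx₀⟩
      exact h1 ▸ hπ z
    have hsubB : B ⊆ I (π y₀) := by
      intro z hz
      have h1 : π z = π y₀ := hsB (π z) (π y₀) ⟨z, hπ z, hz⟩ ⟨y₀, hπ y₀, hy₀⟩
      exact h1 ▸ hπ z
    have hne : π x₀ ≠ π y₀ := by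
      intro h
      exact hstraddle A B hAB (π x₀) x₀ y₀ (hπ x₀) (h ▸ hπ y₀) hx₀ hy₀
    refine ⟨π x₀, π y₀, ⟨hne, ?_⟩, hsubA, hsubB⟩
    refine Lzero _ _ ?_ ?_
    · exact L2 (π x₀) (π y₀) x₀ yt₀ hne (hπ x₀) (hsubB hyt₀) hyt₀v
    · exact L1 (π x₀) (π y₀) x₀ yo₀ hne (hπ x₀) (hsubB hyo₀) hyo₀v
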